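/- Let X be a finite poset, K(X) its order complex (the simplicial complex of nonempty totally ordered subsets of X), and f : K(X) → X the surjection sending a chain x_0 < ... < x_k to its maximum x_k, which is an order-preserving map of posets (faces of chains map to smaller-or-equal elements). Then the pullback functor f* : Shv(X, C) → Shv(K(X), C), defined by (f*F)(x_•) := F(max x_•) on objects and by F(max x_• ≤ max y_•) on face relations, is fully faithful. -/

import Mathlib

open CategoryTheory

/-- The order complex of a poset `X`: nonempty finite totally ordered subsets
(chains) of `X`, viewed as a poset under the face (inclusion) relation. -/
def OrderCx (X : Type) [PartialOrder X] : Type :=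
  {s : Finset X // s.Nonempty ∧ IsChain (· ≤ ·) (s : Set X)}

instance (X : Type) [PartialOrder X] : PartialOrder (OrderCx X) :=
  inferInstanceAs (PartialOrder {s : Finset X // s.Nonempty ∧ IsChain (· ≤ ·) (s : Set X)})

/-- A nonempty finite chain has a maximum. -/
lemma OrderCx.exists_max (X : Type) [PartialOrder X] (s : OrderCx X) :
    ∃ m ∈ s.1, ∀ x ∈ s.1, x ≤ m := by
  obtain ⟨m, hm, hmax⟩ := s.1.exists_maximal s.2.1
  refine ⟨m, hm, fun x hx => ?_⟩
  rcases eq_or_ne x m with rfl | hne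
  · exact le_rfl
  · rcases s.2.2 hx hm hne with h | h
    · exact h
    · first
      | exact hmax hx h
      | exact absurd (h.lt_of_ne hne.symm) (hmax x hx)

/-- The projection `f : K(X) → X` sending a chain `x_0 < ... < x_k` to its maximum. -/
noncomputable def chainMax (X : Type) [PartialOrder X] (s : OrderCx X) : X :=
  (OrderCx.exists_max X s).choose

lemma chainMax_mem (X : Type) [PartialOrder X] (s : OrderCx X) : chainMax X s ∈ s.1 :=
  (OrderCx.exists_max X s).choose_spec.1

lemma le_chainMax (X : Type) [PartialOrder X] (s : OrderCx X) :
    ∀ x ∈ s.1, x ≤ chainMax X s :=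
  (OrderCx.exists_max X s).choose_spec.2

/-- The projection is order preserving (faces map to smaller-or-equal elements). -/
lemma chainMax_monotone (X : Type) [PartialOrder X] : Monotone (chainMax X) := by
  intro s t h
  exact le_chainMax X t _ (Finset.le_iff_subset.mp h (chainMax_mem X s))

/-- The pullback functor `f* : Shv(X, C) → Shv(K(X), C)` along the projection
`f : K(X) → X`, given by `(f*F)(x_•) = F(max x_•)` (precomposition with `f`). -/
noncomputable def pullbackOrderCx (X : Type) [PartialOrder X]
    (C : Type*) [Category C] : (X ⥤ C) ⥤ (OrderCx X ⥤ C) :=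
  (Functor.whiskeringLeft (OrderCx X) X C).obj (chainMax_monotone X).functor

/-! ### Auxiliary material -/

/-- The singleton chain `{x}`. -/
def OrderCx.sgl {X : Type} [PartialOrder X] (x : X) : OrderCx X :=
  ⟨{x}, ⟨x, Finset.mem_singleton_self x⟩, by
    rw [Finset.coe_singleton]; exact Set.subsingleton_singleton.isChain⟩

lemma chainMax_sgl {X : Type} [PartialOrder X] (x : X) : chainMax X (OrderCx.sgl x) = x :=
  Finset.mem_singleton.mp (chainMax_mem X (OrderCx.sgl x))

/-- The two-element chain `{x, y}` when `x ≤ y`. -/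
noncomputable def OrderCx.pair {X : Type} [PartialOrder X] (x y : X) (h : x ≤ y) : OrderCx X :=
  letI := Classical.decEq X
  ⟨{x, y}, ⟨x, by simp⟩, by
    intro a ha b hb _
    simp only [Finset.coe_insert, Finset.coe_singleton, Set.mem_insert_iff,
      Set.mem_singleton_iff] at ha hb
    rcases ha with rfl | rfl <;> rcases hb with rfl | rfl <;> simp [h]⟩

lemma mem_pair_left {X : Type} [PartialOrder X] (x y : X) (h : x ≤ y) :
    x ∈ (OrderCx.pair x y h).1 := by
  letI := Classical.decEq X
  show x ∈ ({x, y} : Finset X)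
  simp

lemma mem_pair_right {X : Type} [PartialOrder X] (x y : X) (h : x ≤ y) :
    y ∈ (OrderCx.pair x y h).1 := by
  letI := Classical.decEq X
  show y ∈ ({x, y} : Finset X)
  simp

lemma chainMax_pair {X : Type} [PartialOrder X] (x y : X) (h : x ≤ y) :
    chainMax X (OrderCx.pair x y h) = y := by
  letI := Classical.decEq X
  refine le_antisymm ?_ (le_chainMax X _ y (mem_pair_right x y h))
  have hm := chainMax_mem X (OrderCx.pair x y h)
  have : chainMax X (OrderCx.pair x y h) ∈ ({x, y} : Finset X) := hm
  rcases Finset.mem_insert.mp this with h' | h'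
  · rw [h']; exact h
  · rw [Finset.mem_singleton.mp h']

/-- In a preorder category, functor application to a morphism is determined by
the endpoints, up to `eqToHom` conjugation. -/
lemma pmap_eq {P : Type} [Preorder P] {C : Type*} [Category C] (F : P ⥤ C)
    {a b a' b' : P} (g : a ⟶ b) (f : a' ⟶ b') (h₁ : a = a') (h₂ : b = b') :
    F.map g = eqToHom (congrArg F.obj h₁) ≫ F.map f ≫ eqToHom (congrArg F.obj h₂.symm) := by
  subst h₁; subst h₂
  rw [Subsingleton.elim g f]; simp

/-- The value of a transformation `f*F ⟶ f*G` at a chain is determined by its value at the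
singleton chain on the maximum. -/
lemma app_eq_sgl {X : Type} [PartialOrder X] {C : Type*} [Category C] {F G : X ⥤ C}
    (α : (pullbackOrderCx X C).obj F ⟶ (pullbackOrderCx X C).obj G)
    (s : OrderCx X) (m : X) (hm : chainMax X s = m) :
    α.app s = eqToHom (congrArg F.obj (hm.trans (chainMax_sgl m).symm)) ≫
      α.app (OrderCx.sgl m) ≫ eqToHom (congrArg G.obj ((chainMax_sgl m).trans hm.symm)) := by
  subst hm
  set m := chainMax X s with hmdef
  have hsub : OrderCx.sgl m ≤ s := by
    show ({m} : Finset X) ≤ s.1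
    rw [Finset.le_iff_subset, Finset.singleton_subset_iff]
    exact chainMax_mem X s
  have n := α.naturality (homOfLE hsub)
  simp only [pullbackOrderCx, Functor.whiskeringLeft, Functor.comp_map, Monotone.functor,
    Functor.comp_obj] at n
  rw [pmap_eq F _ (𝟙 m) (chainMax_sgl m) rfl, pmap_eq G _ (𝟙 m) (chainMax_sgl m) rfl] at n
  simp at n
  exact (eqToHom_comp_iff _ _ _).mp n

/-- For a finite poset `X`, the pullback functor
`f* : Shv(X, C) → Shv(K(X), C)` along the projection from the order complex is
fully faithful. -/
theorem pullback_orderCx_fullyFaithful (X : Type) [PartialOrder X] [Fintype X]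
    (C : Type*) [Category C] :
    (pullbackOrderCx X C).Full ∧ (pullbackOrderCx X C).Faithful := by
  constructor
  · refine ⟨fun {F G} α => ?_⟩
    refine ⟨⟨fun x => eqToHom (congrArg F.obj (chainMax_sgl x).symm) ≫ α.app (OrderCx.sgl x) ≫
          eqToHom (congrArg G.obj (chainMax_sgl x)), ?_⟩, ?_⟩
    · intro x y f
      have h : x ≤ y := leOfHom f
      have i₁ : OrderCx.sgl x ⟶ OrderCx.pair x y h := homOfLE (by
        show ({x} : Finset X) ≤ (OrderCx.pair x y h).1
        rw [Finset.le_iff_subset, Finset.singleton_subset_iff]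
        exact mem_pair_left x y h)
      have n := α.naturality i₁
      simp only [pullbackOrderCx, Functor.whiskeringLeft, Functor.comp_map, Monotone.functor,
        Functor.comp_obj] at n
      rw [pmap_eq F _ f (chainMax_sgl x) (chainMax_pair x y h),
        pmap_eq G _ f (chainMax_sgl x) (chainMax_pair x y h),
        app_eq_sgl α (OrderCx.pair x y h) y (chainMax_pair x y h)] at n
      simp only [Category.assoc, eqToHom_trans, eqToHom_trans_assoc] at n ⊢
      rw [← cancel_epi (eqToHom (congrArg F.obj (chainMax_sgl x))),
        ← cancel_mono (eqToHom (congrArg G.obj (chainMax_pair x y h).symm))]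
      dsimp only [pullbackOrderCx, Functor.whiskeringLeft, Functor.comp_obj, Monotone.functor] at n ⊢
      simp only [Category.assoc] at n ⊢
      erw [eqToHom_trans]
      simpa using n
    · ext s
      rw [app_eq_sgl α s (chainMax X s) rfl]
      simp [pullbackOrderCx]
  · refine ⟨fun {F G} β γ hβγ => ?_⟩
    ext x
    have := congrArg (fun t => NatTrans.app t (OrderCx.sgl x)) hβγ
    simp only [pullbackOrderCx, Functor.whiskeringLeft, Monotone.functor] at this
    rw [← chainMax_sgl x]
    exact this
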